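/- Let t ≥ 2 and k ≥ 1 be integers and 0 = τ_0 < τ_1 < ⋯ < τ_k = t be integers, with block lengths d_i = τ_i − τ_{i−1}. Let X_1,…,X_t be i.i.d. square-integrable real random variables with mean μ and variance σ². Let Z_1,…,Z_k be independent square-integrable random variables with mean 0 and variance σ_DP² each, let W_1,…,W_k be independent integrable random variables with mean 0, and assume the X's, Z's, and W's are mutually independent. For i ∈ [k] let S_i = ∑_{j=τ_{i−1}+1}^{τ_i} X_j and Q_i = ∑_{j=τ_{i−1}+1}^{τ_i} X_j², and define V = (1/(t−1)) ∑_{i=1}^k [ Q_i − S_i²/d_i + ((d_i−1)/d_i)·W_i + (S_i + Z_i)²/d_i ] − (t/(t−1)) ( (1/t)(∑_{j=1}^t X_j + ∑_{i=1}^k Z_i) )² − (σ_DP²/(t−1)) ( ∑_{i=1}^k 1/d_i − k/t ). Then E[V] = σ². -/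

import Mathlib

open MeasureTheory ProbabilityTheory Finset

lemma memLp_sum_fun {Ω ι : Type*} [MeasurableSpace Ω] {P : Measure Ω}
    {Y : ι → Ω → ℝ} (s : Finset ι) (hmem : ∀ i ∈ s, MemLp (Y i) 2 P) :
    MemLp (fun ω => ∑ i ∈ s, Y i ω) 2 P := by
  have := memLp_finset_sum' s hmem
  simpa [Finset.sum_fn] using this

lemma exp_sq_sum {Ω ι : Type*} [MeasurableSpace Ω] {P : Measure Ω} [IsProbabilityMeasure P]
    {Y : ι → Ω → ℝ} (h : iIndepFun Y P)
    (s : Finset ι) (hmem : ∀ i ∈ s, MemLp (Y i) 2 P) :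
    ∫ ω, (∑ i ∈ s, Y i ω) ^ 2 ∂P
      = (∑ i ∈ s, variance (Y i) P) + (∑ i ∈ s, ∫ ω, Y i ω ∂P) ^ 2 := by
  have hsum : MemLp (∑ i ∈ s, Y i) 2 P := memLp_finset_sum' s hmem
  have hv := variance_eq_sub hsum
  have hvar : variance (∑ i ∈ s, Y i) P = ∑ i ∈ s, variance (Y i) P :=
    IndepFun.variance_sum hmem (fun i _ j _ hij => h.indepFun hij)
  have hmean : ∫ ω, (∑ i ∈ s, Y i) ω ∂P = ∑ i ∈ s, ∫ ω, Y i ω ∂P := by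
    simp only [Finset.sum_apply]
    exact integral_finset_sum s (fun i hi => (hmem i hi).integrable one_le_two)
  rw [hvar] at hv
  have h2 : ∫ ω, ((∑ i ∈ s, Y i) ^ 2) ω ∂P = ∫ ω, (∑ i ∈ s, Y i ω) ^ 2 ∂P := by
    simp [Finset.sum_apply]
  rw [h2, hmean] at hv
  linarith

theorem released_sample_variance_unbiased
    (Ω : Type*) [MeasurableSpace Ω] (P : Measure Ω) [IsProbabilityMeasure P]
    (t k : ℕ) (ht : 2 ≤ t) (hk : 1 ≤ k)
    (τ : ℕ → ℕ) (hτ0 : τ 0 = 0) (hτk : τ k = t) (hτmono : ∀ i < k, τ i < τ (i + 1))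
    (μ σ2 σDP2 : ℝ)
    (X Z W : ℕ → Ω → ℝ)
    (hindep : iIndepFun
      (Sum.elim X (Sum.elim Z W) : ℕ ⊕ (ℕ ⊕ ℕ) → Ω → ℝ) P)
    (hXmem : ∀ j, MemLp (X j) 2 P)
    (hXid : ∀ i j, IdentDistrib (X i) (X j) P P)
    (hXmean : ∀ j, ∫ ω, X j ω ∂P = μ)
    (hXvar : ∀ j, variance (X j) P = σ2)
    (hZmem : ∀ i, MemLp (Z i) 2 P)
    (hZmean : ∀ i, ∫ ω, Z i ω ∂P = 0)
    (hZvar : ∀ i, variance (Z i) P = σDP2)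
    (hWint : ∀ i, Integrable (W i) P)
    (hWmean : ∀ i, ∫ ω, W i ω ∂P = 0) :
    ∫ ω,
      ((1 / ((t : ℝ) - 1)) * ∑ i ∈ Icc 1 k,
          ((∑ j ∈ Icc (τ (i - 1) + 1) (τ i), (X j ω) ^ 2)
            - (∑ j ∈ Icc (τ (i - 1) + 1) (τ i), X j ω) ^ 2 / ((τ i : ℝ) - (τ (i - 1) : ℝ))
            + (((τ i : ℝ) - (τ (i - 1) : ℝ) - 1) / ((τ i : ℝ) - (τ (i - 1) : ℝ))) * W i ω
            + ((∑ j ∈ Icc (τ (i - 1) + 1) (τ i), X j ω) + Z i ω) ^ 2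
                / ((τ i : ℝ) - (τ (i - 1) : ℝ)))
        - ((t : ℝ) / ((t : ℝ) - 1)) *
            ((1 / (t : ℝ)) * ((∑ j ∈ Icc 1 t, X j ω) + ∑ i ∈ Icc 1 k, Z i ω)) ^ 2
        - (σDP2 / ((t : ℝ) - 1)) *
            ((∑ i ∈ Icc 1 k, 1 / ((τ i : ℝ) - (τ (i - 1) : ℝ))) - (k : ℝ) / (t : ℝ))) ∂P
      = σ2 := by
  classical
  -- basic cast facts
  have ht2 : (2 : ℝ) ≤ (t : ℝ) := by exact_mod_cast ht
  have ht0 : (t : ℝ) ≠ 0 := by linarith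
  have ht1 : (t : ℝ) - 1 ≠ 0 := by
    intro h; linarith
  -- block facts
  have hblock : ∀ i ∈ Icc 1 k, τ (i - 1) < τ i := by
    intro i hi
    obtain ⟨h1, h2⟩ := Finset.mem_Icc.mp hi
    have := hτmono (i - 1) (by omega)
    rwa [Nat.sub_add_cancel h1] at this
  have hcard : ∀ i ∈ Icc 1 k,
      ((Icc (τ (i - 1) + 1) (τ i)).card : ℝ) = (τ i : ℝ) - (τ (i - 1) : ℝ) := by
    intro i hi
    have h := hblock i hi
    have h2 : τ i + 1 - (τ (i - 1) + 1) = τ i - τ (i - 1) := by omega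
    rw [Nat.card_Icc, h2, Nat.cast_sub h.le]
  -- the mean of X j ^ 2
  have hX2 : ∀ j, ∫ ω, X j ω ^ 2 ∂P = σ2 + μ ^ 2 := by
    intro j
    have h := variance_eq_sub (hXmem j)
    simp only [Pi.pow_apply] at h
    rw [hXvar j, hXmean j] at h
    linarith
  -- second moment of block sums of X
  have hES2 : ∀ u : Finset ℕ,
      ∫ ω, (∑ j ∈ u, X j ω) ^ 2 ∂P = (u.card : ℝ) * σ2 + ((u.card : ℝ) * μ) ^ 2 := by
    intro u
    have hmem' : ∀ s ∈ u.image Sum.inl,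
        MemLp ((Sum.elim X (Sum.elim Z W) : ℕ ⊕ (ℕ ⊕ ℕ) → Ω → ℝ) s) 2 P := by
      intro s hs
      simp only [Finset.mem_image] at hs
      obtain ⟨j, _, rfl⟩ := hs
      simpa using hXmem j
    have h := exp_sq_sum hindep (u.image Sum.inl) hmem'
    have hinj : ∀ x ∈ u, ∀ y ∈ u, (Sum.inl x : ℕ ⊕ (ℕ ⊕ ℕ)) = Sum.inl y → x = y :=
      fun x _ y _ hxy => Sum.inl.inj hxy
    have e1 : ∀ ω, ∑ s ∈ u.image Sum.inl,
        (Sum.elim X (Sum.elim Z W) : ℕ ⊕ (ℕ ⊕ ℕ) → Ω → ℝ) s ω = ∑ j ∈ u, X j ω := by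
      intro ω; rw [Finset.sum_image hinj]; simp
    have e2 : ∑ s ∈ u.image Sum.inl,
        variance ((Sum.elim X (Sum.elim Z W) : ℕ ⊕ (ℕ ⊕ ℕ) → Ω → ℝ) s) P
        = (u.card : ℝ) * σ2 := by
      rw [Finset.sum_image hinj]; simp [hXvar, mul_comm]
    have e3 : ∑ s ∈ u.image Sum.inl,
        ∫ ω, (Sum.elim X (Sum.elim Z W) : ℕ ⊕ (ℕ ⊕ ℕ) → Ω → ℝ) s ω ∂P
        = (u.card : ℝ) * μ := by
      rw [Finset.sum_image hinj]; simp [hXmean, mul_comm]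
    simp only [e1, e2, e3] at h
    exact h
  -- second moment of block sums of X plus a Z
  have hESZ2 : ∀ (u : Finset ℕ) (i : ℕ),
      ∫ ω, ((∑ j ∈ u, X j ω) + Z i ω) ^ 2 ∂P
        = (u.card : ℝ) * σ2 + σDP2 + ((u.card : ℝ) * μ) ^ 2 := by
    intro u i
    have hnot : (Sum.inr (Sum.inl i) : ℕ ⊕ (ℕ ⊕ ℕ)) ∉ u.image Sum.inl := by simp
    have hmem' : ∀ s ∈ insert (Sum.inr (Sum.inl i) : ℕ ⊕ (ℕ ⊕ ℕ)) (u.image Sum.inl),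
        MemLp ((Sum.elim X (Sum.elim Z W) : ℕ ⊕ (ℕ ⊕ ℕ) → Ω → ℝ) s) 2 P := by
      intro s hs
      rcases Finset.mem_insert.mp hs with rfl | hs
      · simpa using hZmem i
      · simp only [Finset.mem_image] at hs
        obtain ⟨j, _, rfl⟩ := hs
        simpa using hXmem j
    have h := exp_sq_sum hindep _ hmem'
    have hinj : ∀ x ∈ u, ∀ y ∈ u, (Sum.inl x : ℕ ⊕ (ℕ ⊕ ℕ)) = Sum.inl y → x = y :=
      fun x _ y _ hxy => Sum.inl.inj hxy
    have e1 : ∀ ω, ∑ s ∈ insert (Sum.inr (Sum.inl i) : ℕ ⊕ (ℕ ⊕ ℕ)) (u.image Sum.inl),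
        (Sum.elim X (Sum.elim Z W) : ℕ ⊕ (ℕ ⊕ ℕ) → Ω → ℝ) s ω
        = (∑ j ∈ u, X j ω) + Z i ω := by
      intro ω
      rw [Finset.sum_insert hnot, Finset.sum_image hinj]
      simp [add_comm]
    have e2 : ∑ s ∈ insert (Sum.inr (Sum.inl i) : ℕ ⊕ (ℕ ⊕ ℕ)) (u.image Sum.inl),
        variance ((Sum.elim X (Sum.elim Z W) : ℕ ⊕ (ℕ ⊕ ℕ) → Ω → ℝ) s) P
        = σDP2 + (u.card : ℝ) * σ2 := by
      rw [Finset.sum_insert hnot, Finset.sum_image hinj]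
      simp [hXvar, hZvar, mul_comm]
    have e3 : ∑ s ∈ insert (Sum.inr (Sum.inl i) : ℕ ⊕ (ℕ ⊕ ℕ)) (u.image Sum.inl),
        ∫ ω, (Sum.elim X (Sum.elim Z W) : ℕ ⊕ (ℕ ⊕ ℕ) → Ω → ℝ) s ω ∂P
        = (u.card : ℝ) * μ := by
      rw [Finset.sum_insert hnot, Finset.sum_image hinj]
      simp [hXmean, hZmean, mul_comm]
    simp only [e1, e2, e3] at h
    rw [h]; ring
  -- second moment of the total sum
  have hET2 : ∫ ω, ((∑ j ∈ Icc 1 t, X j ω) + ∑ i ∈ Icc 1 k, Z i ω) ^ 2 ∂P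
      = (t : ℝ) * σ2 + (k : ℝ) * σDP2 + ((t : ℝ) * μ) ^ 2 := by
    have hdisj : Disjoint ((Icc 1 t).image (Sum.inl : ℕ → ℕ ⊕ (ℕ ⊕ ℕ)))
        ((Icc 1 k).image (fun i => (Sum.inr (Sum.inl i) : ℕ ⊕ (ℕ ⊕ ℕ)))) := by
      rw [Finset.disjoint_left]
      rintro s hs hs'
      simp only [Finset.mem_image] at hs hs'
      obtain ⟨j, _, rfl⟩ := hs
      obtain ⟨i, _, h⟩ := hs'
      exact absurd h (by simp)
    set s0 : Finset (ℕ ⊕ (ℕ ⊕ ℕ)) :=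
      ((Icc 1 t).image Sum.inl) ∪ ((Icc 1 k).image (fun i => Sum.inr (Sum.inl i))) with hs0
    have hmem' : ∀ s ∈ s0,
        MemLp ((Sum.elim X (Sum.elim Z W) : ℕ ⊕ (ℕ ⊕ ℕ) → Ω → ℝ) s) 2 P := by
      intro s hs
      rw [hs0, Finset.mem_union] at hs
      rcases hs with hs | hs <;> simp only [Finset.mem_image] at hs
      · obtain ⟨j, _, rfl⟩ := hs; simpa using hXmem j
      · obtain ⟨i, _, rfl⟩ := hs; simpa using hZmem i
    have h := exp_sq_sum hindep s0 hmem'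
    have hinj1 : ∀ x ∈ Icc 1 t, ∀ y ∈ Icc 1 t,
        (Sum.inl x : ℕ ⊕ (ℕ ⊕ ℕ)) = Sum.inl y → x = y := fun x _ y _ hxy => Sum.inl.inj hxy
    have hinj2 : ∀ x ∈ Icc 1 k, ∀ y ∈ Icc 1 k,
        (Sum.inr (Sum.inl x) : ℕ ⊕ (ℕ ⊕ ℕ)) = Sum.inr (Sum.inl y) → x = y := by
      intro x _ y _ hxy
      exact Sum.inl.inj (Sum.inr.inj hxy)
    have e1 : ∀ ω, ∑ s ∈ s0, (Sum.elim X (Sum.elim Z W) : ℕ ⊕ (ℕ ⊕ ℕ) → Ω → ℝ) s ω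
        = (∑ j ∈ Icc 1 t, X j ω) + ∑ i ∈ Icc 1 k, Z i ω := by
      intro ω
      rw [hs0, Finset.sum_union hdisj, Finset.sum_image hinj1, Finset.sum_image hinj2]
      simp
    have e2 : ∑ s ∈ s0,
        variance ((Sum.elim X (Sum.elim Z W) : ℕ ⊕ (ℕ ⊕ ℕ) → Ω → ℝ) s) P
        = (t : ℝ) * σ2 + (k : ℝ) * σDP2 := by
      rw [hs0, Finset.sum_union hdisj, Finset.sum_image hinj1, Finset.sum_image hinj2]
      simp [hXvar, hZvar, Nat.card_Icc, mul_comm]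
    have e3 : ∑ s ∈ s0,
        ∫ ω, (Sum.elim X (Sum.elim Z W) : ℕ ⊕ (ℕ ⊕ ℕ) → Ω → ℝ) s ω ∂P
        = (t : ℝ) * μ := by
      rw [hs0, Finset.sum_union hdisj, Finset.sum_image hinj1, Finset.sum_image hinj2]
      simp [hXmean, hZmean, Nat.card_Icc, mul_comm]
    simp only [e1, e2, e3] at h
    exact h
  -- per-block integrability and expectation
  have key : ∀ i ∈ Icc 1 k,
      Integrable (fun ω =>
          (∑ j ∈ Icc (τ (i - 1) + 1) (τ i), (X j ω) ^ 2)
            - (∑ j ∈ Icc (τ (i - 1) + 1) (τ i), X j ω) ^ 2 / ((τ i : ℝ) - (τ (i - 1) : ℝ))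
            + (((τ i : ℝ) - (τ (i - 1) : ℝ) - 1) / ((τ i : ℝ) - (τ (i - 1) : ℝ))) * W i ω
            + ((∑ j ∈ Icc (τ (i - 1) + 1) (τ i), X j ω) + Z i ω) ^ 2
                / ((τ i : ℝ) - (τ (i - 1) : ℝ))) P ∧
      ∫ ω, ((∑ j ∈ Icc (τ (i - 1) + 1) (τ i), (X j ω) ^ 2)
            - (∑ j ∈ Icc (τ (i - 1) + 1) (τ i), X j ω) ^ 2 / ((τ i : ℝ) - (τ (i - 1) : ℝ))
            + (((τ i : ℝ) - (τ (i - 1) : ℝ) - 1) / ((τ i : ℝ) - (τ (i - 1) : ℝ))) * W i ω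
            + ((∑ j ∈ Icc (τ (i - 1) + 1) (τ i), X j ω) + Z i ω) ^ 2
                / ((τ i : ℝ) - (τ (i - 1) : ℝ))) ∂P
        = ((τ i : ℝ) - (τ (i - 1) : ℝ)) * (σ2 + μ ^ 2)
            + σDP2 * (1 / ((τ i : ℝ) - (τ (i - 1) : ℝ))) := by
    intro i hi
    have hd : ((Icc (τ (i - 1) + 1) (τ i)).card : ℝ) = (τ i : ℝ) - (τ (i - 1) : ℝ) :=
      hcard i hi
    have hdpos : (0 : ℝ) < (τ i : ℝ) - (τ (i - 1) : ℝ) := by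
      have := hblock i hi
      have : (τ (i - 1) : ℝ) < (τ i : ℝ) := by exact_mod_cast this
      linarith
    have hdne : (τ i : ℝ) - (τ (i - 1) : ℝ) ≠ 0 := ne_of_gt hdpos
    set u := Icc (τ (i - 1) + 1) (τ i) with hu
    set D : ℝ := (τ i : ℝ) - (τ (i - 1) : ℝ) with hD
    have intA : Integrable (fun ω => ∑ j ∈ u, X j ω ^ 2) P :=
      integrable_finset_sum _ (fun j _ => (hXmem j).integrable_sq)
    have memS : MemLp (fun ω => ∑ j ∈ u, X j ω) 2 P :=
      memLp_sum_fun u (fun j _ => hXmem j)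
    have intB : Integrable (fun ω => (∑ j ∈ u, X j ω) ^ 2 / D) P :=
      memS.integrable_sq.div_const D
    have intC : Integrable (fun ω => ((D - 1) / D) * W i ω) P := (hWint i).const_mul _
    have memSZ : MemLp (fun ω => (∑ j ∈ u, X j ω) + Z i ω) 2 P := memS.add (hZmem i)
    have intD : Integrable (fun ω => ((∑ j ∈ u, X j ω) + Z i ω) ^ 2 / D) P :=
      memSZ.integrable_sq.div_const D
    refine ⟨((intA.sub intB).add intC).add intD, ?_⟩
    have e1' := integral_add ((intA.sub intB).add intC) intD
    have e2' := integral_add (intA.sub intB) intC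
    have e3' := integral_sub intA intB
    simp only [Pi.add_apply, Pi.sub_apply] at e1' e2' e3'
    rw [e1', e2', e3']
    have iA : ∫ ω, ∑ j ∈ u, X j ω ^ 2 ∂P = D * (σ2 + μ ^ 2) := by
      rw [integral_finset_sum _ (fun j _ => (hXmem j).integrable_sq)]
      simp only [hX2]
      rw [Finset.sum_const, nsmul_eq_mul, hd]
    have iB : ∫ ω, (∑ j ∈ u, X j ω) ^ 2 / D ∂P = (D * σ2 + (D * μ) ^ 2) / D := by
      rw [integral_div, hES2 u, hd]
    have iC : ∫ ω, ((D - 1) / D) * W i ω ∂P = 0 := by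
      rw [integral_const_mul, hWmean i, mul_zero]
    have iD : ∫ ω, ((∑ j ∈ u, X j ω) + Z i ω) ^ 2 / D ∂P
        = (D * σ2 + σDP2 + (D * μ) ^ 2) / D := by
      rw [integral_div, hESZ2 u i, hd]
    rw [iA, iB, iC, iD]
    field_simp
    ring
  -- telescoping sum of block lengths
  have hTele : ∑ i ∈ Icc 1 k, ((τ i : ℝ) - (τ (i - 1) : ℝ)) = (t : ℝ) := by
    rw [← Finset.Ico_add_one_right_eq_Icc, Finset.sum_Ico_eq_sum_range]
    simp only [Nat.add_sub_cancel, Nat.add_sub_cancel_left, Nat.succ_sub_one]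
    have : ∀ x ∈ Finset.range k, (τ (1 + x) : ℝ) - (τ x : ℝ)
        = (τ (x + 1) : ℝ) - (τ x : ℝ) := by
      intro x _; rw [add_comm]
    rw [Finset.sum_congr rfl this, Finset.sum_range_sub (fun n => (τ n : ℝ))]
    rw [hτk, hτ0]
    simp
  -- assemble
  set T : Ω → ℝ := fun ω => (∑ j ∈ Icc 1 t, X j ω) + ∑ i ∈ Icc 1 k, Z i ω with hT
  have memT : MemLp T 2 P := by
    have h1 : MemLp (fun ω => ∑ j ∈ Icc 1 t, X j ω) 2 P :=
      memLp_sum_fun _ (fun j _ => hXmem j)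
    have h2 : MemLp (fun ω => ∑ i ∈ Icc 1 k, Z i ω) 2 P :=
      memLp_sum_fun _ (fun i _ => hZmem i)
    exact h1.add h2
  have memG : MemLp (fun ω => (1 / (t : ℝ)) * T ω) 2 P := memT.const_mul _
  have intG : Integrable (fun ω => ((1 / (t : ℝ)) * T ω) ^ 2) P := memG.integrable_sq
  have intF : Integrable (fun ω => ∑ i ∈ Icc 1 k,
      ((∑ j ∈ Icc (τ (i - 1) + 1) (τ i), (X j ω) ^ 2)
        - (∑ j ∈ Icc (τ (i - 1) + 1) (τ i), X j ω) ^ 2 / ((τ i : ℝ) - (τ (i - 1) : ℝ))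
        + (((τ i : ℝ) - (τ (i - 1) : ℝ) - 1) / ((τ i : ℝ) - (τ (i - 1) : ℝ))) * W i ω
        + ((∑ j ∈ Icc (τ (i - 1) + 1) (τ i), X j ω) + Z i ω) ^ 2
            / ((τ i : ℝ) - (τ (i - 1) : ℝ)))) P :=
    integrable_finset_sum _ (fun i hi => (key i hi).1)
  have intF' := intF.const_mul (1 / ((t : ℝ) - 1))
  have intG' := intG.const_mul ((t : ℝ) / ((t : ℝ) - 1))
  have e1' := integral_sub (intF'.sub intG')
      (integrable_const (σDP2 / ((t : ℝ) - 1) *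
        ((∑ i ∈ Icc 1 k, 1 / ((τ i : ℝ) - (τ (i - 1) : ℝ))) - (k : ℝ) / (t : ℝ))))
  have e2' := integral_sub intF' intG'
  simp only [Pi.sub_apply] at e1' e2'
  rw [e1', e2', integral_const, integral_const_mul, integral_const_mul]
  have iF : ∫ ω, ∑ i ∈ Icc 1 k,
      ((∑ j ∈ Icc (τ (i - 1) + 1) (τ i), (X j ω) ^ 2)
        - (∑ j ∈ Icc (τ (i - 1) + 1) (τ i), X j ω) ^ 2 / ((τ i : ℝ) - (τ (i - 1) : ℝ))
        + (((τ i : ℝ) - (τ (i - 1) : ℝ) - 1) / ((τ i : ℝ) - (τ (i - 1) : ℝ))) * W i ω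
        + ((∑ j ∈ Icc (τ (i - 1) + 1) (τ i), X j ω) + Z i ω) ^ 2
            / ((τ i : ℝ) - (τ (i - 1) : ℝ))) ∂P
      = (t : ℝ) * (σ2 + μ ^ 2)
          + σDP2 * ∑ i ∈ Icc 1 k, 1 / ((τ i : ℝ) - (τ (i - 1) : ℝ)) := by
    rw [integral_finset_sum _ (fun i hi => (key i hi).1)]
    rw [Finset.sum_congr rfl (fun i hi => (key i hi).2)]
    rw [Finset.sum_add_distrib, ← Finset.sum_mul, hTele, ← Finset.mul_sum]
  have iG : ∫ ω, ((1 / (t : ℝ)) * T ω) ^ 2 ∂P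
      = (1 / (t : ℝ)) ^ 2 * ((t : ℝ) * σ2 + (k : ℝ) * σDP2 + ((t : ℝ) * μ) ^ 2) := by
    have e : ∀ ω, ((1 / (t : ℝ)) * T ω) ^ 2 = (1 / (t : ℝ)) ^ 2 * (T ω) ^ 2 := by
      intro ω; ring
    simp only [e]
    rw [integral_const_mul]
    rw [hT]
    exact congrArg _ hET2
  rw [iF, iG]
  simp only [probReal_univ, measure_univ, ENNReal.toReal_one, smul_eq_mul, one_mul]
  set R : ℝ := ∑ i ∈ Icc 1 k, 1 / ((τ i : ℝ) - (τ (i - 1) : ℝ)) with hR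
  field_simp
  ring
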